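/- Let F be a frequency alphabet with |F| = M, let X = {X_0, …, X_{L−1}} be an (N,M,L)-FHS set over F and Y = {Y_0, …, Y_{L'−1}} an (N',M,L')-FHS set over F with NL = N'L'.ertSuppose there is a bijection π from {0,…,L'−1} × Z_{N'} onto {0,…,L−1} × Z_N such that Y_j(s) = X_{π(j,s)_1}(π(j,s)_2) for all j, s. Then S_a(X) + S_c(X) = S_a(Y) + S_c(Y). Moreover, if N, N', L, L' ≥ 2, then X has optimal AHC if and only if Y has optimal AHC. -/

import Mathlib

open Finset

/-- Periodic Hamming correlation of two FHSs `X, Y : ZMod N → F` at shift `τ`. -/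
def Hcorr {N : ℕ} [NeZero N] {F : Type*} [DecidableEq F]
    (X Y : ZMod N → F) (τ : ZMod N) : ℕ :=
  (Finset.univ.filter (fun t => X t = Y (t + τ))).card

/-- `N_X(a)`: number of occurrences of frequency `a` in the FHS `X`. -/
def countFreq {N : ℕ} [NeZero N] {F : Type*} [DecidableEq F]
    (X : ZMod N → F) (a : F) : ℕ :=
  (Finset.univ.filter (fun t => X t = a)).card

/-- `N_U(a)`: total number of occurrences of `a` in the FHS set `U`. -/
def countFreqSet {N L : ℕ} [NeZero N] {F : Type*} [DecidableEq F]
    (U : Fin L → ZMod N → F) (a : F) : ℕ :=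
  ∑ i : Fin L, countFreq (U i) a

/-- `S_a(U)`: sum of all out-of-phase Hamming autocorrelation values. -/
def Sa {N L : ℕ} [NeZero N] {F : Type*} [DecidableEq F]
    (U : Fin L → ZMod N → F) : ℕ :=
  ∑ i : Fin L, ∑ τ ∈ Finset.univ \ {(0 : ZMod N)}, Hcorr (U i) (U i) τ

/-- `S_c(U)`: sum of all Hamming crosscorrelation values (ordered pairs `i ≠ j`). -/
def Sc {N L : ℕ} [NeZero N] {F : Type*} [DecidableEq F]
    (U : Fin L → ZMod N → F) : ℕ :=
  ∑ i : Fin L, ∑ j ∈ Finset.univ \ {i}, ∑ τ : ZMod N, Hcorr (U i) (U j) τ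

/-- Average Hamming autocorrelation `A_a(U) = S_a(U)/(L(N-1))`. -/
def Aa {N L : ℕ} [NeZero N] {F : Type*} [DecidableEq F]
    (U : Fin L → ZMod N → F) : ℚ :=
  (Sa U : ℚ) / ((L : ℚ) * ((N : ℚ) - 1))

/-- Average Hamming crosscorrelation `A_c(U) = S_c(U)/(L(L-1)N)`. -/
def Ac {N L : ℕ} [NeZero N] {F : Type*} [DecidableEq F]
    (U : Fin L → ZMod N → F) : ℚ :=
  (Sc U : ℚ) / ((L : ℚ) * ((L : ℚ) - 1) * (N : ℚ))

/-- `H_a(U)`: maximum out-of-phase Hamming autocorrelation of the set `U`. -/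
def Ha {N L : ℕ} [NeZero N] {F : Type*} [DecidableEq F]
    (U : Fin L → ZMod N → F) : ℕ :=
  Finset.univ.sup fun i => (Finset.univ \ {(0 : ZMod N)}).sup fun τ => Hcorr (U i) (U i) τ

/-- `H_c(U)`: maximum Hamming crosscorrelation of the set `U`. -/
def Hc {N L : ℕ} [NeZero N] {F : Type*} [DecidableEq F]
    (U : Fin L → ZMod N → F) : ℕ :=
  Finset.univ.sup fun i => (Finset.univ \ {i}).sup fun j =>
    Finset.univ.sup fun τ => Hcorr (U i) (U j) τ

/-- `U` has optimal average Hamming correlation (meets the Peng et al. AHC bound with equality). -/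
def optimalAHC {N L : ℕ} [NeZero N] {F : Type*} [Fintype F] [DecidableEq F]
    (U : Fin L → ZMod N → F) : Prop :=
  Aa U / ((N : ℚ) * ((L : ℚ) - 1)) + Ac U / ((N : ℚ) - 1)
    = ((N : ℚ) * L - Fintype.card F) /
      ((Fintype.card F : ℚ) * ((N : ℚ) - 1) * ((L : ℚ) - 1))

/-- The cyclotomic class `C_r = {α^(Ml+r) : 0 ≤ l ≤ f-1}`. -/
def cycClass {F : Type*} [Monoid F] [DecidableEq F] (α : F) (M f r : ℕ) : Finset F :=
  (Finset.range f).image fun l => α ^ (M * l + r)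

/-- The cyclotomic number `(i,j)_M = |(C_i + 1) ∩ C_j|`. -/
def cycNum {F : Type*} [Field F] [DecidableEq F] (α : F) (M f i j : ℕ) : ℕ :=
  (((cycClass α M f i).image fun x => x + 1) ∩ cycClass α M f j).card



lemma crossSum {N : ℕ} [NeZero N] {F : Type*} [Fintype F] [DecidableEq F]
    (X Y : ZMod N → F) :
    ∑ τ : ZMod N, Hcorr X Y τ = ∑ a : F, countFreq X a * countFreq Y a := by
  simp only [Hcorr, Finset.card_filter]
  rw [Finset.sum_comm]
  have h2 : ∀ t : ZMod N, (∑ τ : ZMod N, if X t = Y (t + τ) then 1 else 0)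
      = ∑ s : ZMod N, if X t = Y s then 1 else 0 :=
    fun t => Fintype.sum_equiv (Equiv.addLeft t) _ _ (fun τ => rfl)
  simp only [h2]
  have h3 : ∀ (t s : ZMod N), (if X t = Y s then (1:ℕ) else 0)
      = ∑ a : F, (if X t = a then 1 else 0) * (if Y s = a then 1 else 0) := by
    intro t s
    rw [Finset.sum_eq_single (X t)]
    · simp [eq_comm]
    · intro b _ hb; simp [Ne.symm hb]
    · simp
  simp only [h3]
  have h4 : ∀ t : ZMod N, (∑ s : ZMod N, ∑ a : F,
      (if X t = a then (1:ℕ) else 0) * (if Y s = a then 1 else 0))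
      = ∑ a : F, ∑ s : ZMod N, (if X t = a then 1 else 0) * (if Y s = a then 1 else 0) :=
    fun t => Finset.sum_comm
  simp only [h4]
  rw [Finset.sum_comm]
  refine Finset.sum_congr rfl fun a _ => ?_
  rw [← Finset.sum_mul_sum]
  rw [countFreq, countFreq, Finset.card_filter, Finset.card_filter]

lemma hcorr_self_zero {N : ℕ} [NeZero N] {F : Type*} [DecidableEq F]
    (X : ZMod N → F) : Hcorr X X 0 = N := by
  simp [Hcorr, ZMod.card]

lemma total_sum {N L : ℕ} [NeZero N] {F : Type*} [Fintype F] [DecidableEq F]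
    (U : Fin L → ZMod N → F) :
    Sa U + Sc U + L * N = ∑ a : F, (countFreqSet U a)^2 := by
  have key : ∑ i : Fin L, ∑ j : Fin L, ∑ τ : ZMod N, Hcorr (U i) (U j) τ
      = ∑ a : F, (countFreqSet U a)^2 := by
    have h1 : ∀ i j : Fin L, ∑ τ : ZMod N, Hcorr (U i) (U j) τ
        = ∑ a : F, countFreq (U i) a * countFreq (U j) a := fun i j => crossSum _ _
    simp only [h1]
    have h2 : ∀ i : Fin L, (∑ j : Fin L, ∑ a : F, countFreq (U i) a * countFreq (U j) a)
        = ∑ a : F, ∑ j : Fin L, countFreq (U i) a * countFreq (U j) a :=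
      fun i => Finset.sum_comm
    simp only [h2]
    rw [Finset.sum_comm]
    refine Finset.sum_congr rfl fun a _ => ?_
    rw [countFreqSet, sq, Finset.sum_mul_sum]
  have split : ∑ i : Fin L, ∑ j : Fin L, ∑ τ : ZMod N, Hcorr (U i) (U j) τ
      = Sc U + (Sa U + L * N) := by
    have h3 : ∀ i : Fin L, (∑ j : Fin L, ∑ τ : ZMod N, Hcorr (U i) (U j) τ)
        = (∑ j ∈ Finset.univ \ {i}, ∑ τ : ZMod N, Hcorr (U i) (U j) τ)
          + (∑ τ ∈ Finset.univ \ {(0 : ZMod N)}, Hcorr (U i) (U i) τ + N) := by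
      intro i
      rw [Finset.sum_eq_sum_sdiff_singleton_add (Finset.mem_univ i)]
      congr 1
      rw [Finset.sum_eq_sum_sdiff_singleton_add (Finset.mem_univ (0 : ZMod N)),
        hcorr_self_zero]
    simp only [h3]
    rw [Finset.sum_add_distrib, Finset.sum_add_distrib, Sa, Sc]
    simp [mul_comm, add_assoc]
  omega

lemma count_eq {N N' L L' : ℕ} [NeZero N] [NeZero N']
    {F : Type*} [DecidableEq F]
    (X : Fin L → ZMod N → F) (Y : Fin L' → ZMod N' → F)
    (e : Fin L' × ZMod N' ≃ Fin L × ZMod N)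
    (he : ∀ (j : Fin L') (s : ZMod N'), Y j s = X (e (j, s)).1 (e (j, s)).2)
    (a : F) : countFreqSet Y a = countFreqSet X a := by
  have hY : countFreqSet Y a = ∑ p : Fin L' × ZMod N', if Y p.1 p.2 = a then 1 else 0 := by
    rw [countFreqSet, Fintype.sum_prod_type]
    exact Finset.sum_congr rfl fun j _ => by rw [countFreq, Finset.card_filter]
  have hX : countFreqSet X a = ∑ p : Fin L × ZMod N, if X p.1 p.2 = a then 1 else 0 := by
    rw [countFreqSet, Fintype.sum_prod_type]
    exact Finset.sum_congr rfl fun j _ => by rw [countFreq, Finset.card_filter]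
  rw [hY, hX]
  refine Fintype.sum_equiv e _ _ fun p => ?_
  rw [he p.1 p.2]

lemma opt_iff {N L : ℕ} [NeZero N] {F : Type*} [Fintype F] [DecidableEq F]
    (U : Fin L → ZMod N → F) (hN : 2 ≤ N) (hL : 2 ≤ L)
    (hMpos : 0 < Fintype.card F) :
    optimalAHC U ↔ ((Sa U : ℚ) + Sc U)
      = (N : ℚ) * L * ((N : ℚ) * L - Fintype.card F) / Fintype.card F := by
  set M : ℚ := (Fintype.card F : ℚ) with hMdef
  have hM0 : M ≠ 0 := by positivity
  have hN2 : (2:ℚ) ≤ (N:ℚ) := by exact_mod_cast hN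
  have hL2 : (2:ℚ) ≤ (L:ℚ) := by exact_mod_cast hL
  have hN0 : (N:ℚ) ≠ 0 := by linarith
  have hL0 : (L:ℚ) ≠ 0 := by linarith
  have hN1 : (N:ℚ) - 1 ≠ 0 := by intro h; linarith
  have hL1 : (L:ℚ) - 1 ≠ 0 := by intro h; linarith
  have hD : (N:ℚ) * L * ((N:ℚ) - 1) * ((L:ℚ) - 1) ≠ 0 := by
    simp [hN0, hL0, hN1, hL1]
  have key1 : Aa U / ((N : ℚ) * ((L : ℚ) - 1)) + Ac U / ((N : ℚ) - 1)
      = ((Sa U : ℚ) + Sc U) / ((N:ℚ) * L * ((N:ℚ) - 1) * ((L:ℚ) - 1)) := by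
    rw [Aa, Ac]
    field_simp
  have key2 : ((N : ℚ) * L - M) / (M * ((N : ℚ) - 1) * ((L : ℚ) - 1))
      = ((N:ℚ) * L * ((N:ℚ) * L - M) / M) / ((N:ℚ) * L * ((N:ℚ) - 1) * ((L:ℚ) - 1)) := by
    field_simp
  rw [optimalAHC, key1, key2, div_eq_div_iff hD hD, mul_left_inj' hD]

/-- Theorem 14, interleaving preserves the correlation sum and AHC optimality. -/
theorem interleaving_preserves_AHC (N N' L L' M : ℕ) [NeZero N] [NeZero N']
    {F : Type*} [Fintype F] [DecidableEq F] (hM : Fintype.card F = M)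
    (X : Fin L → ZMod N → F) (Y : Fin L' → ZMod N' → F)
    (hNL : N * L = N' * L')
    (e : Fin L' × ZMod N' ≃ Fin L × ZMod N)
    (he : ∀ (j : Fin L') (s : ZMod N'), Y j s = X (e (j, s)).1 (e (j, s)).2) :
    Sa X + Sc X = Sa Y + Sc Y ∧
    (2 ≤ N → 2 ≤ N' → 2 ≤ L → 2 ≤ L' → (optimalAHC X ↔ optimalAHC Y)) := by
  have hc : ∀ a : F, countFreqSet Y a = countFreqSet X a := count_eq X Y e he
  have hX := total_sum X
  have hY := total_sum Y
  have hsq : ∑ a : F, (countFreqSet Y a)^2 = ∑ a : F, (countFreqSet X a)^2 := by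
    simp only [hc]
  have hLN : L * N = L' * N' := by rw [mul_comm, hNL, mul_comm]
  have main1 : Sa X + Sc X = Sa Y + Sc Y := by omega
  refine ⟨main1, fun hN hN' hL hL' => ?_⟩
  have hF : Nonempty F := ⟨X ⟨0, by omega⟩ 0⟩
  have hMpos : 0 < Fintype.card F := Fintype.card_pos
  rw [opt_iff X hN hL hMpos, opt_iff Y hN' hL' hMpos]
  have hcast : (N:ℚ) * L = (N':ℚ) * L' := by exact_mod_cast hNL
  have hmain : (Sa X : ℚ) + Sc X = (Sa Y : ℚ) + Sc Y := by exact_mod_cast main1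
  rw [hmain, hcast]
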